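/- Let p be the apex of a cone F with opening angle π/3. Let x and y be points in F with |xp| ≤ r_x, |yp| ≤ r_y, and r_x ≤ r_y. Then |xy| ≤ r_y, i.e., the transmission graph contains an edge from y to x. -/

import Mathlib

open Real

lemma aux_inner_ge {V : Type*} [NormedAddCommGroup V] [InnerProductSpace ℝ V]
    (u v b : V) (hb : ‖b‖ = 1)
    (hu : Real.sqrt 3 / 2 * ‖u‖ ≤ inner ℝ u b)
    (hv : Real.sqrt 3 / 2 * ‖v‖ ≤ inner ℝ v b) :
    (‖u‖ * ‖v‖) / 2 ≤ (inner ℝ u v : ℝ) := by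
  set α : ℝ := inner ℝ u b with hαdef
  set β : ℝ := inner ℝ v b with hβdef
  clear_value α β
  have hs3 : Real.sqrt 3 ^ 2 = 3 := Real.sq_sqrt (by norm_num)
  have hs3n : (0:ℝ) ≤ Real.sqrt 3 := Real.sqrt_nonneg 3
  have hun : (0:ℝ) ≤ ‖u‖ := norm_nonneg u
  have hvn : (0:ℝ) ≤ ‖v‖ := norm_nonneg v
  have hαnn : 0 ≤ α := le_trans (by positivity) hu
  have hβnn : 0 ≤ β := le_trans (by positivity) hv
  have hbb : (inner ℝ b b : ℝ) = 1 := by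
    rw [real_inner_self_eq_norm_sq, hb]; norm_num
  have hup : ‖u - α • b‖ ^ 2 = ‖u‖ ^ 2 - α ^ 2 := by
    rw [norm_sub_sq_real, real_inner_smul_right, norm_smul, hb, ← hαdef]
    simp [abs_of_nonneg hαnn]
    ring
  have hvp : ‖v - β • b‖ ^ 2 = ‖v‖ ^ 2 - β ^ 2 := by
    rw [norm_sub_sq_real, real_inner_smul_right, norm_smul, hb, ← hβdef]
    simp [abs_of_nonneg hβnn]
    ring
  have hcs := abs_real_inner_le_norm (u - α • b) (v - β • b)
  have hinner : (inner ℝ (u - α • b) (v - β • b) : ℝ) = inner ℝ u v - α * β := by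
    rw [inner_sub_left, inner_sub_right, inner_sub_right, real_inner_smul_left,
      real_inner_smul_right, real_inner_smul_left, real_inner_smul_right, hbb,
      real_inner_comm v b, ← hαdef, ← hβdef]
    ring
  have hα2 : 3 / 4 * ‖u‖ ^ 2 ≤ α ^ 2 := by
    have := mul_le_mul hu hu (by positivity) hαnn
    nlinarith
  have hβ2 : 3 / 4 * ‖v‖ ^ 2 ≤ β ^ 2 := by
    have := mul_le_mul hv hv (by positivity) hβnn
    nlinarith
  have huple : ‖u - α • b‖ ≤ ‖u‖ / 2 := by
    have h0 := norm_nonneg (u - α • b)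
    nlinarith
  have hvple : ‖v - β • b‖ ≤ ‖v‖ / 2 := by
    have h0 := norm_nonneg (v - β • b)
    nlinarith
  have hαβ : 3 / 4 * (‖u‖ * ‖v‖) ≤ α * β := by
    have e : Real.sqrt 3 / 2 * ‖u‖ * (Real.sqrt 3 / 2 * ‖v‖) = 3 / 4 * (‖u‖ * ‖v‖) := by
      rw [show (3:ℝ) / 4 = Real.sqrt 3 / 2 * (Real.sqrt 3 / 2) by
        rw [div_mul_div_comm, Real.mul_self_sqrt (by norm_num)]; norm_num]
      ring
    calc 3 / 4 * (‖u‖ * ‖v‖) = Real.sqrt 3 / 2 * ‖u‖ * (Real.sqrt 3 / 2 * ‖v‖) := e.symm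
      _ ≤ α * β := mul_le_mul hu hv (by positivity) hαnn
  have hprod : ‖u - α • b‖ * ‖v - β • b‖ ≤ ‖u‖ / 2 * (‖v‖ / 2) :=
    mul_le_mul huple hvple (norm_nonneg _) (by linarith)
  have h1 : |(inner ℝ u v : ℝ) - α * β| ≤ ‖u‖ / 2 * (‖v‖ / 2) := by
    rw [← hinner]; exact hcs.trans hprod
  have h2 := (abs_le.mp h1).1
  have h3 : ‖u‖ / 2 * (‖v‖ / 2) = 1 / 4 * (‖u‖ * ‖v‖) := by ring
  rw [h3] at h2
  linarith

theorem stmt_6 (p b x y : EuclideanSpace ℝ (Fin 2)) (hb : ‖b‖ = 1)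
    (rx ry : ℝ)
    (hx : InnerProductGeometry.angle (x - p) b ≤ π / 6)
    (hy : InnerProductGeometry.angle (y - p) b ≤ π / 6)
    (hxe : dist x p ≤ rx) (hye : dist y p ≤ ry) (hr : rx ≤ ry) :
    dist x y ≤ ry := by
  set u := x - p with hu
  set v := y - p with hv
  have hcos : ∀ w : EuclideanSpace ℝ (Fin 2), InnerProductGeometry.angle w b ≤ π / 6 →
      Real.sqrt 3 / 2 * ‖w‖ ≤ inner ℝ w b := by
    intro w hw
    have h1 : Real.cos (π / 6) ≤ Real.cos (InnerProductGeometry.angle w b) :=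
      Real.cos_le_cos_of_nonneg_of_le_pi (InnerProductGeometry.angle_nonneg w b)
        (by linarith [Real.pi_pos]) hw
    rw [Real.cos_pi_div_six] at h1
    have h2 := InnerProductGeometry.cos_angle_mul_norm_mul_norm w b
    rw [hb, mul_one] at h2
    have h3 := norm_nonneg w
    nlinarith
  have hiuv := aux_inner_ge u v b hb (hcos u hx) (hcos v hy)
  have hd : dist x y = ‖u - v‖ := by
    rw [dist_eq_norm, hu, hv]; congr 1; abel
  have hsq : ‖u - v‖ ^ 2 = ‖u‖ ^ 2 - 2 * inner ℝ u v + ‖v‖ ^ 2 := norm_sub_sq_real u v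
  have hu' : ‖u‖ ≤ rx := by rw [hu, ← dist_eq_norm]; exact hxe
  have hv' : ‖v‖ ≤ ry := by rw [hv, ← dist_eq_norm]; exact hye
  have hun := norm_nonneg u
  have hvn := norm_nonneg v
  have hry : 0 ≤ ry := le_trans hvn hv'
  rw [hd]
  nlinarith [norm_nonneg (u - v), sq_nonneg (‖u‖ - ‖v‖)]
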